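/- For all m, q ∈ ℕ₀, λ ∈ ℂ and z ∈ (−1,1), the operator U^q_m defined by (U^q_m f)(z) := (−1)^q (1−z²)^{(m+q)/2} (d^q/dz^q)[(1−z²)^{−m/2} f(z)] raises the order of the associated Legendre function of general degree: (U^q_m P^m_λ)(z) = P^{m+q}_λ(z). -/

import Mathlib

open scoped BigOperators

open Filter Topology

noncomputable def hcoef (a b c : ℂ) (n : ℕ) : ℂ :=
  (ascPochhammer ℂ n).eval a * (ascPochhammer ℂ n).eval b /
    ((ascPochhammer ℂ n).eval c * (n.factorial : ℂ))

lemma poch_ofReal (x : ℝ) (n : ℕ) :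
    (ascPochhammer ℂ n).eval (x : ℂ) = Complex.ofReal ((ascPochhammer ℝ n).eval x) := by
  have := ascPochhammer_map (algebraMap ℝ ℂ) n
  rw [← this, ← Complex.coe_algebraMap, Polynomial.eval_map, Polynomial.eval₂_at_apply]

lemma poch_pos (n : ℕ) {x : ℝ} (hx : 0 < x) : 0 < (ascPochhammer ℝ n).eval x :=
  ascPochhammer_pos n x hx

lemma poch_norm_le (x : ℂ) (n : ℕ) :
    ‖(ascPochhammer ℂ n).eval x‖ ≤ (ascPochhammer ℝ n).eval (1 + ‖x‖) := by
  induction n with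
  | zero => simp
  | succ n ih =>
    rw [ascPochhammer_succ_eval, ascPochhammer_succ_eval, norm_mul]
    have h1 : ‖x + (n : ℂ)‖ ≤ 1 + ‖x‖ + n := by
      calc ‖x + (n : ℂ)‖ ≤ ‖x‖ + ‖(n : ℂ)‖ := norm_add_le _ _
        _ = ‖x‖ + n := by simp
        _ ≤ 1 + ‖x‖ + n := by linarith
    have h2 : (0:ℝ) ≤ 1 + ‖x‖ + n := by positivity
    exact mul_le_mul ih h1 (norm_nonneg _) (poch_pos n (by positivity)).le

lemma factorial_le_poch (M n : ℕ) :
    (n.factorial : ℝ) ≤ (ascPochhammer ℝ n).eval (1 + (M:ℝ)) := by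
  induction n with
  | zero => simp
  | succ n ih =>
    rw [ascPochhammer_succ_eval, Nat.factorial_succ]
    push_cast
    have h1 : ((n:ℝ) + 1) ≤ 1 + (M:ℝ) + n := by
      have : (0:ℝ) ≤ M := Nat.cast_nonneg M
      linarith
    have h2 : (0:ℝ) < (n.factorial : ℝ) := by positivity
    calc ((n:ℝ)+1) * n.factorial ≤ (1 + (M:ℝ) + n) * (ascPochhammer ℝ n).eval (1 + (M:ℝ)) := by
          apply mul_le_mul h1 ih h2.le (by positivity)
      _ = (ascPochhammer ℝ n).eval (1 + (M:ℝ)) * (1 + (M:ℝ) + n) := by ring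

noncomputable def bndGen (α β r : ℝ) (n : ℕ) : ℝ :=
  (ascPochhammer ℝ n).eval α * (ascPochhammer ℝ n).eval β / ((n.factorial : ℝ))^2 *
    (((n:ℝ)+1)^2 * r ^ n)

lemma bndGen_pos {α β r : ℝ} (hα : 0 < α) (hβ : 0 < β) (hr : 0 < r) (n : ℕ) :
    0 < bndGen α β r n := by
  have := poch_pos n hα
  have := poch_pos n hβ
  have : (0:ℝ) < (n.factorial : ℝ) := by positivity
  unfold bndGen
  positivity

lemma tendsto_ratio_aux (A : ℝ) :
    Tendsto (fun n : ℕ => (A + n) / (1 + n)) atTop (𝓝 1) := by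
  have h1 : Tendsto (fun n : ℕ => (1:ℝ) + n) atTop atTop :=
    tendsto_atTop_add_const_left _ 1 tendsto_natCast_atTop_atTop
  have h2 : Tendsto (fun n : ℕ => (A - 1) / (1 + n)) atTop (𝓝 0) :=
    Tendsto.div_atTop tendsto_const_nhds h1
  have h3 : Tendsto (fun n : ℕ => 1 + (A - 1) / (1 + n)) atTop (𝓝 (1 + 0)) :=
    tendsto_const_nhds.add h2
  rw [add_zero] at h3
  refine h3.congr (fun n => ?_)
  have hn : (1:ℝ) + n ≠ 0 := by positivity
  field_simp
  ring

lemma bndGen_summable {α β r : ℝ} (hα : 1 ≤ α) (hβ : 1 ≤ β) (hr0 : 0 < r) (hr1 : r < 1) :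
    Summable (bndGen α β r) := by
  have hα0 : 0 < α := lt_of_lt_of_le one_pos hα
  have hβ0 : 0 < β := lt_of_lt_of_le one_pos hβ
  have hpos := bndGen_pos hα0 hβ0 hr0
  apply summable_of_ratio_test_tendsto_lt_one hr1
    (Filter.Eventually.of_forall fun n => (hpos n).ne')
  have key : ∀ n : ℕ, ‖bndGen α β r (n+1)‖ / ‖bndGen α β r n‖ =
      r * ((α + n)/(1 + n)) * ((β + n)/(1 + n)) * ((2 + n)/(1 + n))^2 := by
    intro n
    rw [Real.norm_eq_abs, Real.norm_eq_abs, abs_of_pos (hpos (n+1)), abs_of_pos (hpos n)]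
    unfold bndGen
    have e1 := ascPochhammer_succ_eval (S := ℝ) n α
    have e2 := ascPochhammer_succ_eval (S := ℝ) n β
    rw [e1, e2, Nat.factorial_succ]
    have f1 : (0:ℝ) < (ascPochhammer ℝ n).eval α := poch_pos n hα0
    have f2 : (0:ℝ) < (ascPochhammer ℝ n).eval β := poch_pos n hβ0
    have f3 : (0:ℝ) < (n.factorial : ℝ) := by positivity
    have f4 : (0:ℝ) < r ^ n := by positivity
    have f5 : ((n:ℝ) + 1) ≠ 0 := by positivity
    push_cast
    rw [pow_succ]
    field_simp
    ring
  have lim : Tendsto (fun n : ℕ =>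
      r * ((α + n)/(1 + n)) * ((β + n)/(1 + n)) * ((2 + n)/(1 + n))^2) atTop
      (𝓝 (r * 1 * 1 * 1^2)) := by
    exact (((tendsto_const_nhds.mul (tendsto_ratio_aux α)).mul
      (tendsto_ratio_aux β)).mul ((tendsto_ratio_aux 2).pow 2))
  simp only [mul_one, one_pow] at lim
  exact Tendsto.congr (fun n => (key n).symm) lim

lemma poch_nat_ne_zero (M n : ℕ) : (ascPochhammer ℂ n).eval (1 + (M:ℂ)) ≠ 0 := by
  have h : (1 + (M:ℂ)) = ((1 + (M:ℝ) : ℝ) : ℂ) := by push_cast; ring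
  rw [h, poch_ofReal]
  simp only [ne_eq, Complex.ofReal_eq_zero]
  exact (poch_pos n (by positivity)).ne'

lemma poch_nat_norm_ge (M n : ℕ) :
    (n.factorial : ℝ) ≤ ‖(ascPochhammer ℂ n).eval (1 + (M:ℂ))‖ := by
  have h : (1 + (M:ℂ)) = ((1 + (M:ℝ) : ℝ) : ℂ) := by push_cast; ring
  rw [h, poch_ofReal, Complex.norm_real, Real.norm_eq_abs,
    abs_of_pos (poch_pos n (by positivity))]
  exact factorial_le_poch M n

lemma hcoef_norm_le (a b : ℂ) (M n : ℕ) :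
    ‖hcoef a b (1 + (M:ℂ)) n‖ ≤
      (ascPochhammer ℝ n).eval (1 + ‖a‖) * (ascPochhammer ℝ n).eval (1 + ‖b‖) /
        ((n.factorial : ℝ))^2 := by
  unfold hcoef
  rw [norm_div, norm_mul, norm_mul, Complex.norm_natCast]
  have hfac : (0:ℝ) < (n.factorial : ℝ) := by positivity
  have hden : (n.factorial : ℝ)^2 ≤ ‖(ascPochhammer ℂ n).eval (1 + (M:ℂ))‖ * n.factorial := by
    rw [pow_two]
    exact mul_le_mul_of_nonneg_right (poch_nat_norm_ge M n) hfac.le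
  have hnum : ‖(ascPochhammer ℂ n).eval a‖ * ‖(ascPochhammer ℂ n).eval b‖ ≤
      (ascPochhammer ℝ n).eval (1 + ‖a‖) * (ascPochhammer ℝ n).eval (1 + ‖b‖) :=
    mul_le_mul (poch_norm_le a n) (poch_norm_le b n) (norm_nonneg _)
      (poch_pos n (by positivity)).le
  exact div_le_div₀ (mul_nonneg (poch_pos n (show (0:ℝ) < 1 + ‖a‖ by positivity)).le
    (poch_pos n (show (0:ℝ) < 1 + ‖b‖ by positivity)).le) hnum (by positivity) hden


lemma Pquot_nonneg (a b : ℂ) (n : ℕ) :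
    (0:ℝ) ≤ (ascPochhammer ℝ n).eval (1 + ‖a‖) * (ascPochhammer ℝ n).eval (1 + ‖b‖) /
      ((n.factorial : ℝ))^2 :=
  div_nonneg (mul_nonneg (poch_pos n (show (0:ℝ) < 1 + ‖a‖ by positivity)).le
    (poch_pos n (show (0:ℝ) < 1 + ‖b‖ by positivity)).le) (by positivity)

lemma norm_natCast_add_one (n : ℕ) : ‖((n:ℂ)+1)‖ = (n:ℝ)+1 := by
  have : ((n:ℂ)+1) = (((n:ℝ)+1 : ℝ) : ℂ) := by push_cast; ring
  rw [this, Complex.norm_real, Real.norm_eq_abs, abs_of_pos (by positivity)]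

lemma hyp_term_norm_le (a b : ℂ) (M : ℕ) {t : ℂ} {r : ℝ} (ht : ‖t‖ ≤ r) (hr0 : 0 < r) (n : ℕ) :
    ‖hcoef a b (1 + (M:ℂ)) n * t ^ n‖ ≤ bndGen (1 + ‖a‖) (1 + ‖b‖) r n := by
  rw [norm_mul, norm_pow]
  unfold bndGen
  have h1 : ‖t‖ ^ n ≤ ((n:ℝ)+1)^2 * r ^ n := by
    calc ‖t‖ ^ n ≤ r ^ n := pow_le_pow_left₀ (norm_nonneg t) ht n
      _ = 1 * r ^ n := (one_mul _).symm
      _ ≤ ((n:ℝ)+1)^2 * r ^ n := by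
          apply mul_le_mul_of_nonneg_right _ (by positivity)
          nlinarith [Nat.cast_nonneg (α := ℝ) n]
  exact mul_le_mul (hcoef_norm_le a b M n) h1 (by positivity) (Pquot_nonneg a b n)

lemma hyp_summable (a b : ℂ) (M : ℕ) {t : ℂ} {r : ℝ} (ht : ‖t‖ ≤ r) (hr0 : 0 < r) (hr1 : r < 1) :
    Summable (fun n => hcoef a b (1 + (M:ℂ)) n * t ^ n) :=
  Summable.of_norm_bounded (g := bndGen (1 + ‖a‖) (1 + ‖b‖) r)
    (bndGen_summable (by linarith [norm_nonneg a]) (by linarith [norm_nonneg b]) hr0 hr1)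
    (hyp_term_norm_le a b M ht hr0)

lemma hypDaux_norm_le (a b : ℂ) (M : ℕ) {t : ℂ} {r : ℝ} (ht : ‖t‖ ≤ r) (hr0 : 0 < r) (n : ℕ) :
    ‖hcoef a b (1 + (M:ℂ)) n * ((n:ℂ) * t ^ (n-1))‖ ≤
      r⁻¹ * bndGen (1 + ‖a‖) (1 + ‖b‖) r n := by
  have hbpos := bndGen_pos (show (0:ℝ) < 1 + ‖a‖ by positivity)
    (show (0:ℝ) < 1 + ‖b‖ by positivity) hr0 n
  match n with
  | 0 => simp; positivity
  | (k+1) =>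
    rw [norm_mul, norm_mul, norm_pow]
    have h0 : ‖((k+1 : ℕ):ℂ)‖ = (k:ℝ)+1 := by push_cast [norm_natCast_add_one k]; rfl
    rw [h0]
    simp only [Nat.add_sub_cancel]
    have hcb := hcoef_norm_le a b M (k+1)
    set P := (ascPochhammer ℝ (k+1)).eval (1 + ‖a‖) * (ascPochhammer ℝ (k+1)).eval (1 + ‖b‖) /
      (((k+1).factorial : ℝ))^2 with hP
    have hPpos : 0 < P := by
      rw [hP]
      have := poch_pos (k+1) (show (0:ℝ) < 1 + ‖a‖ by positivity)
      have := poch_pos (k+1) (show (0:ℝ) < 1 + ‖b‖ by positivity)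
      have : (0:ℝ) < (((k+1).factorial : ℝ)) := by positivity
      positivity
    have htk : ‖t‖ ^ k ≤ r ^ k := pow_le_pow_left₀ (norm_nonneg t) ht k
    calc ‖hcoef a b (1 + (M:ℂ)) (k+1)‖ * (((k:ℝ)+1) * ‖t‖ ^ k)
        ≤ P * (((k:ℝ)+1) * r ^ k) := by
          apply mul_le_mul hcb (mul_le_mul_of_nonneg_left htk (by positivity))
            (by positivity) hPpos.le
      _ ≤ r⁻¹ * bndGen (1 + ‖a‖) (1 + ‖b‖) r (k+1) := by
          unfold bndGen
          rw [← hP]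
          have hrk : r ^ (k+1) = r * r ^ k := by ring
          push_cast
          rw [hrk]
          have key : ((k:ℝ)+1) ≤ ((k:ℝ)+1+1)^2 := by nlinarith [Nat.cast_nonneg (α := ℝ) k]
          have : P * (((k:ℝ)+1) * r ^ k) ≤ P * ((((k:ℝ)+1+1)^2) * r ^ k) := by
            apply mul_le_mul_of_nonneg_left _ hPpos.le
            exact mul_le_mul_of_nonneg_right key (by positivity)
          calc P * (((k:ℝ)+1) * r ^ k) ≤ P * ((((k:ℝ)+1+1)^2) * r ^ k) := this
            _ = r⁻¹ * (P * (((k:ℝ)+1+1)^2 * (r * r ^ k))) := by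
                field_simp

lemma hypDaux_summable (a b : ℂ) (M : ℕ) {t : ℂ} {r : ℝ} (ht : ‖t‖ ≤ r) (hr0 : 0 < r)
    (hr1 : r < 1) :
    Summable (fun n => hcoef a b (1 + (M:ℂ)) n * ((n:ℂ) * t ^ (n-1))) :=
  Summable.of_norm_bounded (g := fun n => r⁻¹ * bndGen (1 + ‖a‖) (1 + ‖b‖) r n)
    ((bndGen_summable (by linarith [norm_nonneg a]) (by linarith [norm_nonneg b])
      hr0 hr1).mul_left _)
    (hypDaux_norm_le a b M ht hr0)

lemma hypD_summable (a b : ℂ) (M : ℕ) {t : ℂ} {r : ℝ} (ht : ‖t‖ ≤ r) (hr0 : 0 < r)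
    (hr1 : r < 1) :
    Summable (fun n => hcoef a b (1 + (M:ℂ)) (n+1) * (((n:ℂ)+1) * t ^ n)) := by
  have h := (summable_nat_add_iff (f := fun n => hcoef a b (1 + (M:ℂ)) n * ((n:ℂ) * t ^ (n-1))) 1).2
    (hypDaux_summable a b M ht hr0 hr1)
  refine h.congr (fun n => ?_)
  simp only [Nat.add_sub_cancel]
  push_cast
  ring

lemma hypW_summable (a b : ℂ) (M : ℕ) {t : ℂ} {r : ℝ} (ht : ‖t‖ ≤ r) (hr0 : 0 < r)
    (hr1 : r < 1) :
    Summable (fun n => hcoef a b (1 + (M:ℂ)) n * ((n:ℂ) * t ^ n)) := by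
  apply Summable.of_norm_bounded (g := bndGen (1 + ‖a‖) (1 + ‖b‖) r)
    (bndGen_summable (by linarith [norm_nonneg a]) (by linarith [norm_nonneg b]) hr0 hr1)
  intro n
  rw [norm_mul, norm_mul, norm_pow]
  have h0 : ‖((n:ℂ))‖ = (n:ℝ) := by simp
  rw [h0]
  unfold bndGen
  have h1 : (n:ℝ) * ‖t‖ ^ n ≤ ((n:ℝ)+1)^2 * r ^ n := by
    have htn : ‖t‖ ^ n ≤ r ^ n := pow_le_pow_left₀ (norm_nonneg t) ht n
    have : (n:ℝ) ≤ ((n:ℝ)+1)^2 := by nlinarith [Nat.cast_nonneg (α := ℝ) n]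
    exact mul_le_mul this htn (by positivity) (by positivity)
  exact mul_le_mul (hcoef_norm_le a b M n) h1 (by positivity) (Pquot_nonneg a b n)

noncomputable def hypD (a b c t : ℂ) : ℂ :=
  ∑' n : ℕ, hcoef a b c (n+1) * (((n:ℂ)+1) * t ^ n)

noncomputable def hyp2F1' (a b c x : ℂ) : ℂ :=
  ∑' n : ℕ, hcoef a b c n * x ^ n

set_option maxHeartbeats 1000000 in
lemma hyp2F1'_hasDerivAt (a b : ℂ) (M : ℕ) {t₀ : ℂ} (h : ‖t₀‖ < 1) :
    HasDerivAt (fun t => hyp2F1' a b (1 + (M:ℂ)) t) (hypD a b (1 + (M:ℂ)) t₀) t₀ := by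
  set c := 1 + (M:ℂ) with hcdef
  set r : ℝ := (1 + ‖t₀‖)/2 with hrdef
  have hr0 : 0 < r := by positivity
  have hrt : ‖t₀‖ < r := by rw [hrdef]; linarith
  have hr1 : r < 1 := by rw [hrdef]; linarith
  have hball : t₀ ∈ Metric.ball (0:ℂ) r := by
    rw [Metric.mem_ball, dist_zero_right]; exact hrt
  have hderiv : ∀ (n : ℕ) (y : ℂ), y ∈ Metric.ball (0:ℂ) r →
      HasDerivAt (fun z : ℂ => hcoef a b c n * z ^ n)
        (hcoef a b c n * ((n:ℂ) * y ^ (n-1))) y := by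
    intro n y _
    exact (hasDerivAt_pow n y).const_mul (hcoef a b c n)
  have hbound : ∀ (n : ℕ) (y : ℂ), y ∈ Metric.ball (0:ℂ) r →
      ‖hcoef a b c n * ((n:ℂ) * y ^ (n-1))‖ ≤ r⁻¹ * bndGen (1 + ‖a‖) (1 + ‖b‖) r n := by
    intro n y hy
    rw [Metric.mem_ball, dist_zero_right] at hy
    exact hypDaux_norm_le a b M hy.le hr0 n
  have hu : Summable (fun n => r⁻¹ * bndGen (1 + ‖a‖) (1 + ‖b‖) r n) :=
    (bndGen_summable (by linarith [norm_nonneg a]) (by linarith [norm_nonneg b])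
        hr0 hr1).mul_left _
  have main : HasDerivAt (fun t : ℂ => ∑' n : ℕ, hcoef a b c n * t ^ n)
      (∑' n : ℕ, hcoef a b c n * ((n:ℂ) * t₀ ^ (n-1))) t₀ :=
    hasDerivAt_tsum_of_isPreconnected hu Metric.isOpen_ball
      (convex_ball (0:ℂ) r).isPreconnected hderiv hbound hball
      (hyp_summable a b M hrt.le hr0 hr1) hball
  have shift : (∑' n : ℕ, hcoef a b c n * ((n:ℂ) * t₀ ^ (n-1))) = hypD a b c t₀ := by
    rw [Summable.tsum_eq_zero_add (hypDaux_summable a b M hrt.le hr0 hr1)]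
    simp only [Nat.cast_zero, zero_mul, mul_zero, zero_add]
    unfold hypD
    apply tsum_congr
    intro n
    simp only [Nat.add_sub_cancel]
    push_cast
    ring
  rw [← shift]
  exact main

lemma poch_succ_left_eval (x : ℂ) (n : ℕ) :
    (ascPochhammer ℂ (n+1)).eval x = x * (ascPochhammer ℂ n).eval (x + 1) := by
  rw [ascPochhammer_succ_left, Polynomial.eval_mul, Polynomial.eval_X, Polynomial.eval_comp,
    Polynomial.eval_add, Polynomial.eval_X, Polynomial.eval_one]

lemma hcoef_id (a b : ℂ) (M n : ℕ) :
    hcoef a b (1 + (M:ℂ)) (n+1) * ((n:ℂ)+1)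
      + (((1 + (M:ℂ)) - a - b) - n) * hcoef a b (1 + (M:ℂ)) n
    = (((1 + (M:ℂ)) - a) * ((1 + (M:ℂ)) - b) / (1 + (M:ℂ)))
        * hcoef a b ((1 + (M:ℂ)) + 1) n := by
  set c := 1 + (M:ℂ) with hcdef
  have hc : c ≠ 0 := by
    rw [hcdef]
    have h1 : ((1:ℂ) + M) = ((1+M : ℕ):ℂ) := by push_cast; ring
    rw [h1]
    exact (Nat.cast_ne_zero (R := ℂ)).2 (by omega)
  have hcn : c + (n:ℂ) ≠ 0 := by
    rw [hcdef]
    have h1 : ((1:ℂ) + M + n) = ((1+M+n : ℕ):ℂ) := by push_cast; ring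
    rw [h1]
    exact (Nat.cast_ne_zero (R := ℂ)).2 (by omega)
  have hn1 : ((n:ℂ) + 1) ≠ 0 := by
    have h1 : ((n:ℂ) + 1) = ((n+1 : ℕ):ℂ) := by push_cast; ring
    rw [h1]
    exact (Nat.cast_ne_zero (R := ℂ)).2 (by omega)
  have hpc : (ascPochhammer ℂ n).eval c ≠ 0 := poch_nat_ne_zero M n
  have hpcp : (ascPochhammer ℂ n).eval (c + 1) ≠ 0 := by
    have h1 : c + 1 = 1 + ((M+1:ℕ):ℂ) := by rw [hcdef]; push_cast; ring
    rw [h1]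
    exact poch_nat_ne_zero (M+1) n
  have hfac : ((n.factorial : ℕ):ℂ) ≠ 0 := Nat.cast_ne_zero.2 n.factorial_ne_zero
  have hrel : (ascPochhammer ℂ n).eval c * (c + n) = c * (ascPochhammer ℂ n).eval (c+1) := by
    rw [← ascPochhammer_succ_eval, poch_succ_left_eval]
  have hpcp_eq : (ascPochhammer ℂ n).eval (c+1) = (ascPochhammer ℂ n).eval c * (c + n) / c := by
    rw [eq_div_iff hc]
    linear_combination -hrel
  have e2 : hcoef a b c (n+1) = hcoef a b c n * ((a + n) * (b + n) / ((c + n) * ((n:ℂ)+1))) := by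
    unfold hcoef
    rw [ascPochhammer_succ_eval, ascPochhammer_succ_eval, ascPochhammer_succ_eval,
      Nat.factorial_succ]
    push_cast
    field_simp
  have e : hcoef a b (c+1) n = hcoef a b c n * (c / (c + n)) := by
    unfold hcoef
    rw [hpcp_eq]
    field_simp
  rw [e2, e]
  have scalar : ((a + n) * (b + n) / ((c + n) * ((n:ℂ)+1))) * ((n:ℂ)+1)
      + ((c - a - b) - n) = ((c - a) * (c - b) / c) * (c / (c + n)) := by
    field_simp
    ring
  linear_combination (hcoef a b c n) * scalar

lemma contiguous (a b : ℂ) (M : ℕ) {t : ℂ} (h : ‖t‖ < 1) :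
    (1 - t) * hypD a b (1 + (M:ℂ)) t
      + ((1 + (M:ℂ)) - a - b) * hyp2F1' a b (1 + (M:ℂ)) t
    = (((1 + (M:ℂ)) - a) * ((1 + (M:ℂ)) - b) / (1 + (M:ℂ)))
        * hyp2F1' a b ((1 + (M:ℂ)) + 1) t := by
  set c := 1 + (M:ℂ) with hcdef
  set r : ℝ := (1 + ‖t‖)/2 with hrdef
  have hr0 : 0 < r := by positivity
  have hrt : ‖t‖ ≤ r := by rw [hrdef]; linarith
  have hr1 : r < 1 := by rw [hrdef]; linarith
  have hS1 : Summable (fun n => hcoef a b c n * t ^ n) := hyp_summable a b M hrt hr0 hr1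
  have hS2 : Summable (fun n => hcoef a b c (n+1) * (((n:ℂ)+1) * t ^ n)) :=
    hypD_summable a b M hrt hr0 hr1
  have hW : Summable (fun n => hcoef a b c n * ((n:ℂ) * t ^ n)) :=
    hypW_summable a b M hrt hr0 hr1
  have hK : Summable (fun n => (c - a - b) * (hcoef a b c n * t ^ n)) := hS1.mul_left _
  -- t * hypD = ∑' w
  have h1 : t * hypD a b c t = ∑' n : ℕ, hcoef a b c n * ((n:ℂ) * t ^ n) := by
    rw [Summable.tsum_eq_zero_add hW]
    simp only [Nat.cast_zero, zero_mul, mul_zero, zero_add]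
    unfold hypD
    rw [← tsum_mul_left]
    apply tsum_congr
    intro n
    push_cast
    ring
  have h2 : (c - a - b) * hyp2F1' a b c t
      = ∑' n : ℕ, (c - a - b) * (hcoef a b c n * t ^ n) := by
    unfold hyp2F1'
    rw [tsum_mul_left]
  have h3 : (1 - t) * hypD a b c t + (c - a - b) * hyp2F1' a b c t
      = ∑' n : ℕ, (hcoef a b c (n+1) * (((n:ℂ)+1) * t ^ n)
          - hcoef a b c n * ((n:ℂ) * t ^ n)
          + (c - a - b) * (hcoef a b c n * t ^ n)) := by
    rw [Summable.tsum_add (hS2.sub hW) hK, Summable.tsum_sub hS2 hW]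
    rw [sub_mul, one_mul, h1, h2]
    unfold hypD
    rfl
  have h4 : (((c) - a) * ((c) - b) / (c)) * hyp2F1' a b (c + 1) t
      = ∑' n : ℕ, (((c) - a) * ((c) - b) / (c)) * (hcoef a b (c+1) n * t ^ n) := by
    unfold hyp2F1'
    rw [tsum_mul_left]
  rw [h3, h4]
  apply tsum_congr
  intro n
  have hid := hcoef_id a b M n
  rw [← hcdef] at hid
  linear_combination (t ^ n) * hid

/-- The Gauss hypergeometric function `₂F₁(a,b;c;x)` as a power series. -/
noncomputable def hyp2F1 (a b c x : ℂ) : ℂ :=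
  ∑' n : ℕ, ((ascPochhammer ℂ n).eval a * (ascPochhammer ℂ n).eval b /
    ((ascPochhammer ℂ n).eval c * (n.factorial : ℂ))) * x ^ n

/-- The associated Legendre function `P^m_λ` of general degree `λ` and order `m ∈ ℕ`. -/
noncomputable def PLeg (m : ℕ) (lam : ℂ) (z : ℝ) : ℂ :=
  ((ascPochhammer ℂ m).eval (-lam) * (ascPochhammer ℂ m).eval (1 + lam) / (m.factorial : ℂ)) *
    (((1 - z) / (1 + z) : ℂ)) ^ ((m : ℂ) / 2) *
    hyp2F1 (-lam) (lam + 1) (1 + (m : ℂ)) (((1 - z) / 2 : ℝ) : ℂ)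

/-- The order-raising operator `U^q_m`. -/
noncomputable def Uop (m q : ℕ) (f : ℝ → ℂ) (z : ℝ) : ℂ :=
  (-1 : ℂ) ^ q * ((1 - (z : ℂ) ^ 2)) ^ (((m + q : ℕ) : ℂ) / 2) *
    iteratedDeriv q (fun x : ℝ => ((1 - (x : ℂ) ^ 2)) ^ (-(m : ℂ) / 2) * f x) z

lemma hyp_eq (a b c x : ℂ) : hyp2F1 a b c x = hyp2F1' a b c x := rfl

noncomputable def Kc (m : ℕ) (lam : ℂ) : ℂ :=
  (ascPochhammer ℂ m).eval (-lam) * (ascPochhammer ℂ m).eval (1 + lam) / (m.factorial : ℂ)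

lemma cpow_collapse (m : ℕ) {x : ℝ} (hx : x ∈ Set.Ioo (-1:ℝ) 1) :
    ((1 : ℂ) - (x:ℂ) ^ 2) ^ (-(m:ℂ)/2) * (((1 - x) / (1 + x) : ℂ)) ^ ((m : ℂ) / 2)
      = Complex.ofReal ((1+x) ^ (-(m:ℝ))) := by
  obtain ⟨hx1, hx2⟩ := hx
  have hu : (0:ℝ) < 1 - x := by linarith
  have hv : (0:ℝ) < 1 + x := by linarith
  have c1 : ((1:ℂ) - (x:ℂ)^2) = ((1 - x^2 : ℝ) : ℂ) := by push_cast; ring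
  have c2 : (((1 - x) / (1 + x) : ℝ) : ℂ) = ((1 : ℂ) - x) / (1 + x) := by push_cast; ring
  have c3 : (-(m:ℂ)/2) = ((-(m:ℝ)/2 : ℝ) : ℂ) := by push_cast; ring
  have c4 : ((m:ℂ)/2) = (((m:ℝ)/2 : ℝ) : ℂ) := by push_cast; ring
  rw [c1, ← c2, c3, c4, ← Complex.ofReal_cpow (by nlinarith) _,
    ← Complex.ofReal_cpow (by positivity) _, ← Complex.ofReal_mul]
  rw [Complex.ofReal_inj]
  have huv : 1 - x^2 = (1-x)*(1+x) := by ring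
  rw [huv, Real.mul_rpow hu.le hv.le, Real.div_rpow hu.le hv.le]
  have e1 : (1-x)^(-(m:ℝ)/2) * (1-x)^((m:ℝ)/2) = 1 := by
    have hz : -(m:ℝ)/2 + (m:ℝ)/2 = 0 := by ring
    rw [← Real.rpow_add hu, hz, Real.rpow_zero]
  have e2 : (1+x)^(-(m:ℝ)/2) / (1+x)^((m:ℝ)/2) = (1+x)^(-(m:ℝ)) := by
    rw [← Real.rpow_sub hv]; congr 1; ring
  calc (1-x)^(-(m:ℝ)/2) * (1+x)^(-(m:ℝ)/2) * ((1-x)^((m:ℝ)/2) / (1+x)^((m:ℝ)/2))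
      = ((1-x)^(-(m:ℝ)/2) * (1-x)^((m:ℝ)/2)) * ((1+x)^(-(m:ℝ)/2) / (1+x)^((m:ℝ)/2)) := by
        ring
    _ = 1 * (1+x)^(-(m:ℝ)) := by rw [e1, e2]
    _ = (1+x)^(-(m:ℝ)) := one_mul _

lemma inner_eq (m : ℕ) (lam : ℂ) {x : ℝ} (hx : x ∈ Set.Ioo (-1:ℝ) 1) :
    ((1 : ℂ) - (x:ℂ) ^ 2) ^ (-(m:ℂ)/2) * PLeg m lam x
      = Kc m lam * Complex.ofReal ((1+x) ^ (-(m:ℝ))) *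
        hyp2F1' (-lam) (lam+1) (1 + (m:ℂ)) (((1-x)/2 : ℝ) : ℂ) := by
  unfold PLeg Kc
  rw [hyp_eq]
  have key := cpow_collapse m hx
  linear_combination (((ascPochhammer ℂ m).eval (-lam) * (ascPochhammer ℂ m).eval (1 + lam) /
    (m.factorial : ℂ)) * hyp2F1' (-lam) (lam+1) (1 + (m:ℂ)) (((1-x)/2 : ℝ) : ℂ)) * key

noncomputable def gfun (m : ℕ) (lam : ℂ) : ℝ → ℂ :=
  fun x => ((1 : ℂ) - (x:ℂ) ^ 2) ^ (-(m:ℂ)/2) * PLeg m lam x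

lemma Kc_succ (m : ℕ) (lam : ℂ) :
    Kc (m+1) lam = Kc m lam *
      (((1 + (m:ℂ)) - (-lam)) * ((1 + (m:ℂ)) - (lam+1)) / (1 + (m:ℂ))) := by
  have hc : (1 : ℂ) + (m:ℂ) ≠ 0 := by
    have h1 : ((1:ℂ) + m) = ((1+m : ℕ):ℂ) := by push_cast; ring
    rw [h1]
    exact (Nat.cast_ne_zero (R := ℂ)).2 (by omega)
  have hfac : ((m.factorial : ℕ):ℂ) ≠ 0 := Nat.cast_ne_zero.2 m.factorial_ne_zero
  have hm1 : ((m:ℂ) + 1) ≠ 0 := by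
    have h1 : ((m:ℂ) + 1) = ((m+1 : ℕ):ℂ) := by push_cast; ring
    rw [h1]
    exact (Nat.cast_ne_zero (R := ℂ)).2 (by omega)
  unfold Kc
  rw [ascPochhammer_succ_eval, ascPochhammer_succ_eval, Nat.factorial_succ]
  push_cast
  field_simp
  ring

lemma gfun_hasDerivAt (m : ℕ) (lam : ℂ) {z : ℝ} (hz : z ∈ Set.Ioo (-1:ℝ) 1) :
    HasDerivAt (gfun m lam) (-(gfun (m+1) lam z)) z := by
  obtain ⟨hz1, hz2⟩ := hz
  have hu : (0:ℝ) < 1 - z := by linarith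
  have hv : (0:ℝ) < 1 + z := by linarith
  set a := -lam with hadef
  set b := lam + 1 with hbdef
  set c := 1 + (m:ℂ) with hcdef
  set t₀ : ℂ := (1 - (z:ℂ))/2 with ht₀def
  have ecast : ((((1-z)/2 : ℝ)) : ℂ) = t₀ := by rw [ht₀def]; push_cast; ring
  have ht₀ : ‖t₀‖ < 1 := by
    rw [← ecast, Complex.norm_real, Real.norm_eq_abs, abs_of_pos (by positivity)]
    linarith
  set φ : ℝ → ℂ := fun x =>
    Kc m lam * Complex.ofReal ((1+x) ^ (-(m:ℝ))) *
      hyp2F1' a b c ((1 - (x:ℂ))/2) with hφdef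
  -- local agreement
  have heq : gfun m lam =ᶠ[nhds z] φ := by
    filter_upwards [isOpen_Ioo.mem_nhds (show z ∈ Set.Ioo (-1:ℝ) 1 from ⟨hz1, hz2⟩)] with x hx
    have e1 : ((((1-x)/2 : ℝ)) : ℂ) = (1 - (x:ℂ))/2 := by push_cast; ring
    rw [hφdef]
    simp only []
    rw [← e1]
    exact inner_eq m lam hx
  -- derivative of the power factor
  have hA : HasDerivAt (fun x : ℝ => ((1+x) ^ (-(m:ℝ)) : ℝ))
      (-(m:ℝ) * (1+z)^(-(m:ℝ)-1)) z := by
    have base : HasDerivAt (fun y : ℝ => y ^ (-(m:ℝ)))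
        ((-(m:ℝ)) * (1+z)^(-(m:ℝ)-1)) (1+z) :=
      Real.hasDerivAt_rpow_const (Or.inl hv.ne')
    have inner : HasDerivAt (fun x : ℝ => 1 + x) 1 z := (hasDerivAt_id z).const_add 1
    exact (base.comp z inner).congr_deriv (mul_one _)
  have hA' : HasDerivAt (fun x : ℝ => (((1+x) ^ (-(m:ℝ)) : ℝ) : ℂ))
      ((-(m:ℝ) * (1+z)^(-(m:ℝ)-1) : ℝ) : ℂ) z := hA.ofReal_comp
  -- derivative of the hypergeometric factor
  have hB : HasDerivAt (fun x : ℝ => hyp2F1' a b c ((1 - (x:ℂ))/2))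
      (hypD a b c t₀ * (-(1/2 : ℂ))) z := by
    have hi : HasDerivAt (fun y : ℂ => (1 - y)/2) (-(1/2 : ℂ)) (z:ℂ) := by
      exact (((hasDerivAt_id ((z:ℂ))).const_sub 1).div_const 2).congr_deriv (by ring)
    have hF : HasDerivAt (fun t : ℂ => hyp2F1' a b c t) (hypD a b c t₀) ((1 - ((z:ℂ)))/2) := by
      rw [hcdef]
      exact hyp2F1'_hasDerivAt a b m ht₀
    have hcomp := HasDerivAt.comp ((z:ℂ)) hF hi
    exact hcomp.comp_ofReal
  have hφ : HasDerivAt φ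
      ((Kc m lam * ((-(m:ℝ) * (1+z)^(-(m:ℝ)-1) : ℝ) : ℂ)) * hyp2F1' a b c t₀
        + (Kc m lam * (((1+z) ^ (-(m:ℝ)) : ℝ) : ℂ)) * (hypD a b c t₀ * (-(1/2 : ℂ)))) z := by
    have := (hA'.const_mul (Kc m lam)).mul hB
    exact this
  have hgd : HasDerivAt (gfun m lam)
      ((Kc m lam * ((-(m:ℝ) * (1+z)^(-(m:ℝ)-1) : ℝ) : ℂ)) * hyp2F1' a b c t₀
        + (Kc m lam * (((1+z) ^ (-(m:ℝ)) : ℝ) : ℂ)) * (hypD a b c t₀ * (-(1/2 : ℂ)))) z :=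
    hφ.congr_of_eventuallyEq heq
  -- now identify the derivative value
  convert hgd using 1
  -- RHS := -(gfun (m+1) lam z)
  have hrhs : gfun (m+1) lam z
      = Kc (m+1) lam * Complex.ofReal ((1+z) ^ (-((m+1:ℕ):ℝ))) *
          hyp2F1' a b (1 + ((m+1:ℕ):ℂ)) t₀ := by
    unfold gfun
    rw [← ecast]
    exact inner_eq (m+1) lam ⟨hz1, hz2⟩
  rw [hrhs]
  set R : ℂ := (((1+z)^(-(m:ℝ)-1) : ℝ) : ℂ) with hRdef
  have hcast1 : ((-(m:ℝ) * (1+z)^(-(m:ℝ)-1) : ℝ) : ℂ) = -(m:ℂ) * R := by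
    rw [hRdef]; push_cast; ring
  have hcast2 : (((1+z) ^ (-(m:ℝ)) : ℝ) : ℂ) = R * (1 + (z:ℂ)) := by
    have hE1 : ((1+z) ^ (-(m:ℝ)) : ℝ) = (1+z)^(-(m:ℝ)-1) * (1+z) := by
      have h := Real.rpow_add hv (-(m:ℝ)-1) 1
      rw [Real.rpow_one] at h
      rw [← h]
      norm_num
    rw [hE1, hRdef]; push_cast; ring
  have hcast3 : Complex.ofReal ((1+z) ^ (-((m+1:ℕ):ℝ))) = R := by
    rw [show -((m+1:ℕ):ℝ) = -(m:ℝ)-1 by push_cast; ring, hRdef]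
  have hcast4 : (1 : ℂ) + ((m+1:ℕ):ℂ) = c + 1 := by rw [hcdef]; push_cast; ring
  rw [hcast1, hcast2, hcast3, hcast4]
  have hcont := contiguous a b m (t := t₀) ht₀
  rw [← hcdef] at hcont
  have hone : (1:ℂ) - t₀ = (1 + (z:ℂ))/2 := by rw [ht₀def]; ring
  have hKs := Kc_succ m lam
  rw [← hcdef, ← hadef, ← hbdef] at hKs
  rw [hone] at hcont
  linear_combination (-(R * hyp2F1' a b (c+1) t₀)) * hKs + (Kc m lam * R) * hcont

lemma iter_deriv_gfun (q : ℕ) : ∀ (m : ℕ) (lam : ℂ) {z : ℝ}, z ∈ Set.Ioo (-1:ℝ) 1 →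
    iteratedDeriv q (gfun m lam) z = (-1:ℂ)^q * gfun (m+q) lam z := by
  induction q with
  | zero => intro m lam z hz; simp
  | succ q ih =>
    intro m lam z hz
    rw [iteratedDeriv_succ']
    have hev : deriv (gfun m lam) =ᶠ[nhds z] (fun x => -(gfun (m+1) lam x)) := by
      filter_upwards [isOpen_Ioo.mem_nhds hz] with x hx
      exact (gfun_hasDerivAt m lam hx).deriv
    rw [Filter.EventuallyEq.iteratedDeriv_eq q hev]
    rw [iteratedDeriv_fun_neg, ih (m+1) lam hz]
    rw [show m+1+q = m+(q+1) from by omega]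
    ring

theorem Uop_raises_order (m q : ℕ) (lam : ℂ) (z : ℝ) (hz : z ∈ Set.Ioo (-1 : ℝ) 1) :
    Uop m q (fun x : ℝ => PLeg m lam x) z = PLeg (m + q) lam z := by
  unfold Uop
  have hfun : (fun x : ℝ => ((1 - (x : ℂ) ^ 2)) ^ (-(m : ℂ) / 2) * (fun x : ℝ => PLeg m lam x) x)
      = gfun m lam := rfl
  rw [hfun, iter_deriv_gfun q m lam hz]
  obtain ⟨hz1, hz2⟩ := hz
  set w : ℂ := 1 - (z:ℂ)^2 with hwdef
  have hw : w ≠ 0 := by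
    rw [hwdef]
    have h1 : (1:ℂ) - (z:ℂ)^2 = ((1 - z^2 : ℝ):ℂ) := by push_cast; ring
    rw [h1]
    simp only [ne_eq, Complex.ofReal_eq_zero]
    nlinarith
  have hpow : w ^ (((m + q : ℕ) : ℂ) / 2) * w ^ (-((m+q:ℕ):ℂ)/2) = 1 := by
    rw [← Complex.cpow_add _ _ hw]
    have : ((m + q : ℕ) : ℂ) / 2 + -((m+q:ℕ):ℂ)/2 = 0 := by ring
    rw [this, Complex.cpow_zero]
  have hneg : (-1:ℂ)^q * (-1:ℂ)^q = 1 := by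
    rw [← mul_pow]
    norm_num
  unfold gfun
  calc (-1:ℂ)^q * w ^ (((m + q : ℕ) : ℂ) / 2)
        * ((-1:ℂ)^q * (w ^ (-((m+q:ℕ):ℂ)/2) * PLeg (m+q) lam z))
      = ((-1:ℂ)^q * (-1:ℂ)^q) * (w ^ (((m + q : ℕ) : ℂ) / 2) * w ^ (-((m+q:ℕ):ℂ)/2))
          * PLeg (m+q) lam z := by ring
    _ = PLeg (m + q) lam z := by rw [hneg, hpow, one_mul, one_mul]
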